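/- If D is a weighted digraph containing a weak k-double-cycle for some odd k ≥ 3 (as a subdigraph obtainable by vertex splittings and arc subdivisions of the symmetric double cycle C_k*), then for every 0,1-weighting of the arcs of D there is a directed cycle of even total weight; i.e., D is even. -/

import Mathlib

open Matrix

/-- `c` traces a directed cycle of length `m+1` in the digraph `R`:
distinct vertices, consecutive arcs (indices wrap around in `Fin (m+1)`). -/
def DicycleOn {V : Type*} {m : ℕ} (R : V → V → Prop) (c : Fin (m+1) → V) : Prop :=
  Function.Injective c ∧ ∀ i, R (c i) (c (i+1))

/-- A digraph is noneven if some 0,1-weighting (valued in `ZMod 2`) of its arcs makes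
every directed cycle have odd total weight. -/
def IsNoneven {V : Type*} (R : V → V → Prop) : Prop :=
  ∃ w : V → V → ZMod 2, ∀ (m : ℕ) (c : Fin (m+1) → V),
    DicycleOn R c → ∑ i, w (c i) (c (i+1)) = 1

/-- A digraph is even if every 0,1-weighting of its arcs admits a directed cycle
of even total weight. -/
def IsEvenDigraph {V : Type*} (R : V → V → Prop) : Prop :=
  ∀ w : V → V → ZMod 2, ∃ (m : ℕ) (c : Fin (m+1) → V),
    DicycleOn R c ∧ ∑ i, w (c i) (c (i+1)) = 0

def StronglyConnected {V : Type*} (R : V → V → Prop) : Prop :=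
  ∀ u v, Relation.ReflTransGen R u v

/-- Removing any single vertex leaves a strongly connected digraph. -/
def StronglyTwoConnected {V : Type*} (R : V → V → Prop) : Prop :=
  ∀ x : V, StronglyConnected (fun a b : {y : V // y ≠ x} => R a b)

def SemiComplete {V : Type*} (R : V → V → Prop) : Prop :=
  ∀ u v : V, u ≠ v → R u v ∨ R v u

/-- The digraph W₄: double arcs 0↔1 and 2↔3, single arcs 0→2, 2→1, 1→3, 3→0
(the unique 2-connected semi-complete noneven digraph on 4 vertices; every vertex
has indegree 2 and outdegree 2 and there are 8 arcs). -/
def W4 : Fin 4 → Fin 4 → Prop := fun u v =>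
  (u = 0 ∧ v = 1) ∨ (u = 1 ∧ v = 0) ∨ (u = 2 ∧ v = 3) ∨ (u = 3 ∧ v = 2) ∨
  (u = 0 ∧ v = 2) ∨ (u = 2 ∧ v = 1) ∨ (u = 1 ∧ v = 3) ∨ (u = 3 ∧ v = 0)

/-- The symmetric double 4-cycle C₄*. -/
def C4star : Fin 4 → Fin 4 → Prop := fun u v => v = u + 1 ∨ u = v + 1

def DigraphIso {V W : Type*} (R : V → V → Prop) (S : W → W → Prop) : Prop :=
  ∃ e : V ≃ W, ∀ u v, R u v ↔ S (e u) (e v)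

/-- A sign pattern: entries in {-1, 0, 1}. -/
def IsSignPattern {I : Type*} (H : Matrix I I ℝ) : Prop :=
  ∀ i j, H i j = -1 ∨ H i j = 0 ∨ H i j = 1

/-- `A ∈ Q(H)`: the matrix `A` has sign pattern `H`. -/
def HasSignPattern {I : Type*} (A H : Matrix I I ℝ) : Prop :=
  ∀ i j, Real.sign (A i j) = H i j

/-- `Q(H)` contains a symplectic pair `(A, D)` with `Aᵀ D = I`. -/
def AllowsSymplecticPairs {I : Type*} [Fintype I] [DecidableEq I] (H : Matrix I I ℝ) : Prop :=
  ∃ A D : Matrix I I ℝ, HasSignPattern A H ∧ HasSignPattern D H ∧ Aᵀ * D = 1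

def IsSignNonsingular {I : Type*} [Fintype I] [DecidableEq I] (H : Matrix I I ℝ) : Prop :=
  ∀ A : Matrix I I ℝ, HasSignPattern A H → A.det ≠ 0

def NegativeDiagonal {I : Type*} (H : Matrix I I ℝ) : Prop := ∀ i, H i i = -1

/-- The (unweighted) digraph of the pattern `H` is `R`: an arc `(i,j)`, `i ≠ j`,
exactly for the off-diagonal nonzero entries. -/
def PatternDigraph {I : Type*} (H : Matrix I I ℝ) (R : I → I → Prop) : Prop :=
  ∀ i j, i ≠ j → (H i j ≠ 0 ↔ R i j)

/-- An unweighted digraph allows symplectic pairs if some negative-diagonal sign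
pattern whose digraph is `R` allows symplectic pairs. -/
def DigraphAllowsSymplecticPairs {V : Type*} [Fintype V] [DecidableEq V]
    (R : V → V → Prop) : Prop :=
  ∃ H : Matrix V V ℝ, IsSignPattern H ∧ NegativeDiagonal H ∧
    PatternDigraph H R ∧ AllowsSymplecticPairs H

/-- Tree edges of the caterpillar tree underlying an extended caterpillar:
consecutive backbone vertices, and blossom vertices joined to their backbone vertex.
`pos` is the blossom (backbone) index of a vertex, `bb j` the backbone vertex of index `j`. -/
def CaterpillarTreeEdge {n : ℕ} (pos : Fin n → ℕ) (bb : ℕ → Fin n) (u v : Fin n) : Prop :=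
  u ≠ v ∧ ((u = bb (pos u) ∧ v = bb (pos v) ∧ (pos v = pos u + 1 ∨ pos u = pos v + 1)) ∨
           (pos u = pos v ∧ (u = bb (pos u) ∨ v = bb (pos v))))

/-- `R` is an extended caterpillar on `Fin n`, where the natural order of `Fin n`
is the backbone-induced total order: there are `k` blossoms (`pos` monotone, surjective
onto `{0, …, k-1}` with backbone vertices `bb j`); the first and last blossoms are
trivial (no blossom vertices at the ends of the backbone); and the arcs are: one arc
`u → v` for every pair `v < u`, together with both arcs of every tree edge. -/
def IsExtendedCaterpillar {n : ℕ} (R : Fin n → Fin n → Prop) : Prop :=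
  ∃ (k : ℕ) (pos : Fin n → ℕ) (bb : ℕ → Fin n),
    0 < k ∧ Monotone pos ∧ (∀ v, pos v < k) ∧ (∀ j, j < k → pos (bb j) = j) ∧
    (∀ v, pos v = 0 → v = bb 0) ∧ (∀ v, pos v = k - 1 → v = bb (k - 1)) ∧
    (∀ u v, R u v ↔ (v < u ∨ (u < v ∧ CaterpillarTreeEdge pos bb u v)))

/-- Digraphs obtainable from the symmetric double cycle `C_k*` by subdividing arcs
and splitting vertices (the weak k-double-cycles). -/
inductive WeakDoubleCycle : (k : ℕ) → (V : Type) → (V → V → Prop) → Prop where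
  | base (m : ℕ) : WeakDoubleCycle (m+1) (Fin (m+1)) (fun u v => v = u + 1 ∨ u = v + 1)
  | subdivide {k : ℕ} {V : Type} {R : V → V → Prop} (a b : V) (hab : R a b)
      (h : WeakDoubleCycle k V R) :
      WeakDoubleCycle k (Option V) (fun x y =>
        (x = some a ∧ y = none) ∨ (x = none ∧ y = some b) ∨
        (∃ u v, x = some u ∧ y = some v ∧ R u v ∧ ¬(u = a ∧ v = b)))
  | split {k : ℕ} {V : Type} {R : V → V → Prop} (a : V) (h : WeakDoubleCycle k V R) :
      WeakDoubleCycle k (Option V) (fun x y =>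
        (x = some a ∧ y = none) ∨
        (∃ v, x = none ∧ y = some v ∧ R a v) ∨
        (∃ u v, x = some u ∧ y = some v ∧ R u v ∧ u ≠ a))

/-- C₄-cockades: start with the 4-cycle; repeatedly pick an edge `(u,v)`, add two new
vertices `u', v'` and the edges `(u,u')`, `(u',v')`, `(v',v)`. -/
inductive IsC4Cockade : (V : Type) → SimpleGraph V → Prop where
  | base : IsC4Cockade (Fin 4) (SimpleGraph.fromRel (fun u v => v = u + 1))
  | attach {V : Type} {G : SimpleGraph V} (u v : V) (huv : G.Adj u v)
      (h : IsC4Cockade V G) :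
      IsC4Cockade (V ⊕ Fin 2)
        (SimpleGraph.fromRel (fun x y =>
          (∃ a b, x = Sum.inl a ∧ y = Sum.inl b ∧ G.Adj a b) ∨
          (x = Sum.inl u ∧ y = Sum.inr 0) ∨ (x = Sum.inr 0 ∧ y = Sum.inr 1) ∨
          (x = Sum.inr 1 ∧ y = Sum.inl v)))

/-- `G` is 2-connected: connected, and removing any single vertex leaves it connected. -/
def GraphTwoConnected {V : Type*} (G : SimpleGraph V) : Prop :=
  G.Connected ∧ ∀ v : V, (G.induce {u | u ≠ v}).Connected

section AuxStmt7

variable {V : Type*}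

private lemma zmod2_ne_zero' : ∀ {x : ZMod 2}, x ≠ 0 → x = 1 := by decide

private lemma zmod2_add_eq_one' : ∀ {x y : ZMod 2}, x + y = 1 → x = 0 ∨ y = 0 := by decide

private lemma sum_rotate' {m : ℕ} (w : V → V → ZMod 2) (c : Fin (m+1) → V) (t : Fin (m+1)) :
    ∑ i : Fin (m+1), w (c (i + t)) (c (i + 1 + t)) = ∑ i, w (c i) (c (i + 1)) :=
  Fintype.sum_equiv (Equiv.addRight t) _ _
    (fun i => by simp only [Equiv.coe_addRight]; rw [add_right_comm])

private lemma sum_ite_last' {m : ℕ} (A C : ZMod 2) (B : Fin (m+1) → ZMod 2) :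
    (∑ i : Fin (m+1), if i = Fin.last m then A else B i) + C =
    ∑ i : Fin (m+1), if i = Fin.last m then A + C else B i := by
  rw [Fin.sum_univ_castSucc, Fin.sum_univ_castSucc]
  have h : ∀ i : Fin m, (Fin.castSucc i) ≠ Fin.last m := fun i => (Fin.castSucc_lt_last i).ne
  simp [h]
  ring

private lemma snoc_cycle' {m : ℕ} {R : Option V → Option V → Prop}
    (d : Fin (m+1) → V) (hd : Function.Injective d)
    (h1 : ∀ j : Fin (m+1), j ≠ Fin.last m → R (some (d j)) (some (d (j+1))))
    (h2 : R (some (d (Fin.last m))) none)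
    (h3 : R none (some (d 0)))
    (w : Option V → Option V → ZMod 2) :
    ∃ c : Fin (m+1+1) → Option V, DicycleOn R c ∧
      ∑ i, w (c i) (c (i+1)) =
      ∑ j : Fin (m+1), (if j = Fin.last m
        then w (some (d (Fin.last m))) none + w none (some (d 0))
        else w (some (d j)) (some (d (j+1)))) := by
  set c : Fin (m+2) → Option V := Fin.snoc (fun j => some (d j)) none with hc
  have hclast : c (Fin.last (m+1)) = none := Fin.snoc_last _ _
  have hccast : ∀ i : Fin (m+1), c i.castSucc = some (d i) := fun i => Fin.snoc_castSucc _ _ _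
  have hzero : c 0 = some (d 0) := by
    have h0 : (0 : Fin (m+2)) = (0 : Fin (m+1)).castSucc := rfl
    rw [h0, hccast]
  have hadd1 : ∀ i : Fin (m+1), i ≠ Fin.last m →
      (i.castSucc : Fin (m+2)) + 1 = (i+1).castSucc := by
    intro i hi
    apply Fin.ext
    rw [Fin.val_add_one_of_lt (Fin.castSucc_lt_last i), Fin.coe_castSucc, Fin.coe_castSucc,
      Fin.val_add_one_of_lt (lt_of_le_of_ne (Fin.le_last i) hi)]
  have hlastadd : ((Fin.last m).castSucc : Fin (m+2)) + 1 = Fin.last (m+1) := by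
    apply Fin.ext
    rw [Fin.val_add_one_of_lt (Fin.castSucc_lt_last _)]
    simp
  have hlast1 : (Fin.last (m+1) : Fin (m+2)) + 1 = 0 := Fin.last_add_one _
  have hinj : Function.Injective c := by
    intro x y hxy
    rcases Fin.eq_castSucc_or_eq_last x with ⟨x', rfl⟩ | rfl <;>
      rcases Fin.eq_castSucc_or_eq_last y with ⟨y', rfl⟩ | rfl
    · rw [hccast, hccast] at hxy
      exact congrArg Fin.castSucc (hd (Option.some_injective _ hxy))
    · rw [hccast, hclast] at hxy; cases hxy
    · rw [hclast, hccast] at hxy; cases hxy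
    · rfl
  have harc : ∀ i : Fin (m+2), R (c i) (c (i+1)) := by
    intro i
    rcases Fin.eq_castSucc_or_eq_last i with ⟨i', rfl⟩ | rfl
    · by_cases hi' : i' = Fin.last m
      · subst hi'
        rw [hccast, hlastadd, hclast]
        exact h2
      · rw [hccast, hadd1 i' hi', hccast]
        exact h1 i' hi'
    · rw [hclast, hlast1, hzero]
      exact h3
  refine ⟨c, ⟨hinj, harc⟩, ?_⟩
  rw [Fin.sum_univ_castSucc, hclast, hlast1, hzero]
  have hterm : ∀ i : Fin (m+1), w (c i.castSucc) (c (i.castSucc + 1)) =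
      if i = Fin.last m then w (some (d (Fin.last m))) none
      else w (some (d i)) (some (d (i+1))) := by
    intro i
    by_cases hi : i = Fin.last m
    · subst hi; rw [hccast, hlastadd, hclast, if_pos rfl]
    · rw [hccast, hadd1 i hi, hccast, if_neg hi]
  rw [Finset.sum_congr rfl (fun i _ => hterm i)]
  exact sum_ite_last' _ _ _

private lemma even_subdivide' {R : V → V → Prop} (a b : V)
    (h : IsEvenDigraph R) :
    IsEvenDigraph (fun x y : Option V =>
      (x = some a ∧ y = none) ∨ (x = none ∧ y = some b) ∨
      (∃ u v, x = some u ∧ y = some v ∧ R u v ∧ ¬(u = a ∧ v = b))) := by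
  classical
  intro w
  set w₀ : V → V → ZMod 2 := fun u v =>
    if u = a ∧ v = b then w (some a) none + w none (some b)
    else w (some u) (some v) with hw₀
  obtain ⟨m, c, ⟨hinj, harc⟩, hsum⟩ := h w₀
  by_cases hc : ∃ i, c i = a ∧ c (i+1) = b
  · obtain ⟨i₀, hia, hib⟩ := hc
    set t := i₀ + 1 with ht
    set d : Fin (m+1) → V := fun j => c (j + t) with hdd
    have hdinj : Function.Injective d := fun x y hxy => add_right_cancel (hinj hxy)
    have hdlast : d (Fin.last m) = a := by
      have e : Fin.last m + t = i₀ := by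
        rw [ht, add_comm i₀ 1, ← add_assoc, Fin.last_add_one, zero_add]
      simp only [hdd]
      rw [e, hia]
    have hd0 : d 0 = b := by
      simp only [hdd]
      rw [zero_add, ht]
      exact hib
    have hdarc : ∀ j : Fin (m+1), R (d j) (d (j+1)) := by
      intro j
      have h' := harc (j + t)
      simp only [hdd]
      rw [add_right_comm]
      exact h'
    have hda : ∀ j, d j = a → j = Fin.last m := fun j hj =>
      hdinj (hj.trans hdlast.symm)
    obtain ⟨c', hcyc, hsum'⟩ := snoc_cycle'
      (R := fun x y : Option V =>
        (x = some a ∧ y = none) ∨ (x = none ∧ y = some b) ∨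
        (∃ u v, x = some u ∧ y = some v ∧ R u v ∧ ¬(u = a ∧ v = b))) d hdinj
      (fun j hj => Or.inr (Or.inr ⟨d j, d (j+1), rfl, rfl, hdarc j,
        fun hcon => hj (hda j hcon.1)⟩))
      (Or.inl ⟨by rw [hdlast], rfl⟩)
      (Or.inr (Or.inl ⟨rfl, by rw [hd0]⟩)) w
    refine ⟨m+1, c', hcyc, ?_⟩
    rw [hsum']
    have heq : ∀ j : Fin (m+1),
        (if j = Fin.last m then w (some (d (Fin.last m))) none + w none (some (d 0))
         else w (some (d j)) (some (d (j+1)))) = w₀ (d j) (d (j+1)) := by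
      intro j
      by_cases hj : j = Fin.last m
      · subst hj
        have hl : d (Fin.last m + 1) = d 0 := by rw [Fin.last_add_one]
        rw [if_pos rfl, hl, hdlast, hd0, hw₀]
        simp
      · have hcond : ¬(d j = a ∧ d (j+1) = b) := fun hcon => hj (hda j hcon.1)
        rw [if_neg hj, hw₀]
        simp [hcond]
    rw [Finset.sum_congr rfl (fun j _ => heq j)]
    have : ∑ j : Fin (m+1), w₀ (d j) (d (j+1)) = ∑ i, w₀ (c i) (c (i+1)) := by
      simp only [hdd]
      exact sum_rotate' w₀ c t
    rw [this]
    exact hsum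
  · refine ⟨m, fun i => some (c i), ⟨fun x y hxy => hinj (Option.some_injective _ hxy), ?_⟩, ?_⟩
    · intro i
      exact Or.inr (Or.inr ⟨c i, c (i+1), rfl, rfl, harc i,
        fun hcon => hc ⟨i, hcon⟩⟩)
    · rw [← hsum]
      refine Finset.sum_congr rfl (fun i _ => ?_)
      rw [hw₀]
      exact (if_neg (fun hcon => hc ⟨i, hcon⟩)).symm

private lemma even_split' {R : V → V → Prop} (a : V)
    (h : IsEvenDigraph R) :
    IsEvenDigraph (fun x y : Option V =>
      (x = some a ∧ y = none) ∨
      (∃ v, x = none ∧ y = some v ∧ R a v) ∨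
      (∃ u v, x = some u ∧ y = some v ∧ R u v ∧ u ≠ a)) := by
  classical
  intro w
  set w₀ : V → V → ZMod 2 := fun u v =>
    if u = a then w (some a) none + w none (some v)
    else w (some u) (some v) with hw₀
  obtain ⟨m, c, ⟨hinj, harc⟩, hsum⟩ := h w₀
  by_cases hc : ∃ i, c i = a
  · obtain ⟨i₀, hia⟩ := hc
    set t := i₀ + 1 with ht
    set d : Fin (m+1) → V := fun j => c (j + t) with hdd
    have hdinj : Function.Injective d := fun x y hxy => add_right_cancel (hinj hxy)
    have hdlast : d (Fin.last m) = a := by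
      have e : Fin.last m + t = i₀ := by
        rw [ht, add_comm i₀ 1, ← add_assoc, Fin.last_add_one, zero_add]
      simp only [hdd]
      rw [e, hia]
    have hdarc : ∀ j : Fin (m+1), R (d j) (d (j+1)) := by
      intro j
      have h' := harc (j + t)
      simp only [hdd]
      rw [add_right_comm]
      exact h'
    have hda : ∀ j, d j = a → j = Fin.last m := fun j hj =>
      hdinj (hj.trans hdlast.symm)
    have hlA : d (Fin.last m + 1) = d 0 := by rw [Fin.last_add_one]
    have harc0 : R a (d 0) := by
      have h' := hdarc (Fin.last m)
      rw [hlA, hdlast] at h'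
      exact h'
    obtain ⟨c', hcyc, hsum'⟩ := snoc_cycle'
      (R := fun x y : Option V =>
        (x = some a ∧ y = none) ∨
        (∃ v, x = none ∧ y = some v ∧ R a v) ∨
        (∃ u v, x = some u ∧ y = some v ∧ R u v ∧ u ≠ a)) d hdinj
      (fun j hj => Or.inr (Or.inr ⟨d j, d (j+1), rfl, rfl, hdarc j,
        fun hcon => hj (hda j hcon)⟩))
      (Or.inl ⟨by rw [hdlast], rfl⟩)
      (Or.inr (Or.inl ⟨d 0, rfl, rfl, harc0⟩)) w
    refine ⟨m+1, c', hcyc, ?_⟩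
    rw [hsum']
    have heq : ∀ j : Fin (m+1),
        (if j = Fin.last m then w (some (d (Fin.last m))) none + w none (some (d 0))
         else w (some (d j)) (some (d (j+1)))) = w₀ (d j) (d (j+1)) := by
      intro j
      by_cases hj : j = Fin.last m
      · subst hj
        rw [if_pos rfl, hw₀, hlA, hdlast]
        simp
      · have hcond : d j ≠ a := fun hcon => hj (hda j hcon)
        rw [if_neg hj, hw₀]
        simp [hcond]
    rw [Finset.sum_congr rfl (fun j _ => heq j)]
    have : ∑ j : Fin (m+1), w₀ (d j) (d (j+1)) = ∑ i, w₀ (c i) (c (i+1)) := by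
      simp only [hdd]
      exact sum_rotate' w₀ c t
    rw [this]
    exact hsum
  · refine ⟨m, fun i => some (c i), ⟨fun x y hxy => hinj (Option.some_injective _ hxy), ?_⟩, ?_⟩
    · intro i
      exact Or.inr (Or.inr ⟨c i, c (i+1), rfl, rfl, harc i,
        fun hcon => hc ⟨i, hcon⟩⟩)
    · rw [← hsum]
      refine Finset.sum_congr rfl (fun i _ => ?_)
      rw [hw₀]
      exact (if_neg (fun hcon => hc ⟨i, hcon⟩)).symm

private lemma base_even' (m : ℕ) (hodd : Odd (m+1)) (h3 : 3 ≤ m+1) :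
    IsEvenDigraph (fun u v : Fin (m+1) => v = u + 1 ∨ u = v + 1) := by
  intro w
  have hne10 : (1 : Fin (m+1)) ≠ 0 := by
    rw [Ne, Fin.one_eq_zero_iff]
    omega
  by_cases hdig : ∃ i : Fin (m+1), w i (i+1) + w (i+1) i = 0
  · obtain ⟨i, hi⟩ := hdig
    have hne : i ≠ i + 1 := fun hEq => hne10 (left_eq_add.mp hEq)
    refine ⟨1, ![i, i+1], ⟨?_, ?_⟩, ?_⟩
    · intro x y hxy
      fin_cases x <;> fin_cases y <;> simp_all
    · intro j
      fin_cases j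
      · left; simp
      · right
        simp [show ((1 : Fin 2) + 1) = 0 from rfl]
    · rw [Fin.sum_univ_two]
      have h01 : (0 + 1 : Fin 2) = 1 := by decide
      have h11 : (1 + 1 : Fin 2) = 0 := by decide
      rw [h01, h11]
      simp only [Matrix.cons_val_zero, Matrix.cons_val_one, Matrix.head_cons]
      exact hi
  · push_neg at hdig
    have hall : ∀ i : Fin (m+1), w i (i+1) + w (i+1) i = 1 :=
      fun i => zmod2_ne_zero' (hdig i)
    have hcard : ((m+1 : ℕ) : ZMod 2) = 1 := by
      obtain ⟨s, hs⟩ := hodd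
      rw [hs]
      push_cast
      rw [show ((2 : ZMod 2)) = 0 by decide]
      ring
    have hkey : (∑ i : Fin (m+1), w i (i+1)) + (∑ i : Fin (m+1), w (i+1) i) = 1 := by
      rw [← Finset.sum_add_distrib, Finset.sum_congr rfl (fun i _ => hall i),
        Finset.sum_const, Finset.card_univ, Fintype.card_fin, nsmul_eq_mul, mul_one, hcard]
    rcases zmod2_add_eq_one' hkey with h0 | h0
    · exact ⟨m, id, ⟨Function.injective_id, fun i => Or.inl rfl⟩, h0⟩
    · refine ⟨m, fun i => -i, ⟨fun x y hxy => neg_injective hxy,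
        fun i => Or.inr (by grind)⟩, ?_⟩
      have hre : ∑ i : Fin (m+1), w (-i) (-(i+1)) = ∑ j : Fin (m+1), w (j+1) j := by
        apply Fintype.sum_equiv ⟨fun j => -j - 1, fun j => -j - 1,
          fun j => by grind, fun j => by grind⟩
        intro x
        simp only [Equiv.coe_fn_mk]
        congr 1 <;> abel
      rw [show (∑ i : Fin (m+1), w ((fun i => -i) i) ((fun i => -i) (i+1))) =
        ∑ i : Fin (m+1), w (-i) (-(i+1)) from rfl, hre]
      exact h0

private lemma wdc_even' {k : ℕ} {V : Type} {S : V → V → Prop}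
    (h : WeakDoubleCycle k V S) : Odd k → 3 ≤ k → IsEvenDigraph S := by
  induction h with
  | base m => exact fun h1 h2 => base_even' m h1 h2
  | subdivide a b hab h ih => exact fun h1 h2 => even_subdivide' a b (ih h1 h2)
  | split a h ih => exact fun h1 h2 => even_split' a (ih h1 h2)

end AuxStmt7

/-- a digraph containing a weak k-double-cycle (k odd, k ≥ 3) as a
subdigraph is even. -/
theorem stmt7 {V : Type} (R : V → V → Prop)
    (h : ∃ (k : ℕ), Odd k ∧ 3 ≤ k ∧ ∃ (W : Type) (S : W → W → Prop) (f : W → V),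
      Function.Injective f ∧ WeakDoubleCycle k W S ∧ ∀ u v, S u v → R (f u) (f v)) :
    IsEvenDigraph R := by
  obtain ⟨k, hk, h3, W, S, f, hf, hwdc, hsub⟩ := h
  have hS := wdc_even' hwdc hk h3
  intro w
  obtain ⟨m, c, ⟨hinj, harc⟩, hsum⟩ := hS (fun u v => w (f u) (f v))
  exact ⟨m, fun i => f (c i), ⟨hf.comp hinj, fun i => hsub _ _ (harc i)⟩, hsum⟩
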